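/- Let ρ : M° ⇒ M be a morphism of monads that is dense over a class C of M-algebras closed under binary products. Then: (a) any two algebras in C with the same M°-reduct have equal products (are isomorphic via the identity); (b) every M°-algebra morphism between the M°-reducts of two algebras in C is also a morphism of M-algebras; (c) a relation ⊑ is a congruence ordering on an algebra A ∈ C if and only if it is a congruence ordering on the M°-reduct of A. -/

import Mathlib

/-- An object of `Pos`: a type equipped with a partial order. -/
structure Pos : Type 1 where
  car : Type
  po : PartialOrder car

attribute [instance] Pos.po

/-- Monotone maps between objects of `Pos`. -/
structure PHom (A B : Pos) where
  f : A.car → B.car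
  mono : Monotone f

def PHom.id (A : Pos) : PHom A A := ⟨fun a => a, fun _ _ h => h⟩

def PHom.comp {A B C : Pos} (g : PHom B C) (f : PHom A B) : PHom A C :=
  ⟨fun a => g.f (f.f a), fun _ _ h => g.mono (f.mono h)⟩

/-- A monad on the category `Pos` of partially ordered sets and monotone maps. -/
structure OMonad : Type 1 where
  obj : Pos → Pos
  map : {A B : Pos} → PHom A B → PHom (obj A) (obj B)
  map_id : ∀ A : Pos, map (PHom.id A) = PHom.id (obj A)
  map_comp : ∀ {A B C : Pos} (f : PHom A B) (g : PHom B C),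
      map (g.comp f) = (map g).comp (map f)
  sing : ∀ A : Pos, PHom A (obj A)
  flat : ∀ A : Pos, PHom (obj (obj A)) (obj A)
  sing_nat : ∀ {A B : Pos} (f : PHom A B), (map f).comp (sing A) = (sing B).comp f
  flat_nat : ∀ {A B : Pos} (f : PHom A B),
      (map f).comp (flat A) = (flat B).comp (map (map f))
  flat_sing : ∀ A, (flat A).comp (sing (obj A)) = PHom.id (obj A)
  flat_map_sing : ∀ A, (flat A).comp (map (sing A)) = PHom.id (obj A)
  flat_assoc : ∀ A, (flat A).comp (flat (obj A)) = (flat A).comp (map (flat A))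

/-- An Eilenberg–Moore algebra for the monad `M`. -/
structure OAlg (M : OMonad) where
  A : Pos
  pi : PHom (M.obj A) A
  unit_law : pi.comp (M.sing A) = PHom.id A
  assoc_law : pi.comp (M.map pi) = pi.comp (M.flat A)

/-- A morphism of Eilenberg–Moore algebras. -/
structure OAlgHom {M : OMonad} (X Y : OAlg M) where
  h : PHom X.A Y.A
  comm : h.comp X.pi = Y.pi.comp (M.map h)

def OAlgHom.comp {M : OMonad} {X Y Z : OAlg M} (g : OAlgHom Y Z) (f : OAlgHom X Y) :
    OAlgHom X Z :=
  ⟨g.h.comp f.h, by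
    calc (g.h.comp f.h).comp X.pi = g.h.comp (f.h.comp X.pi) := rfl
      _ = g.h.comp (Y.pi.comp (M.map f.h)) := by rw [f.comm]
      _ = (g.h.comp Y.pi).comp (M.map f.h) := rfl
      _ = (Z.pi.comp (M.map g.h)).comp (M.map f.h) := by rw [g.comm]
      _ = Z.pi.comp ((M.map g.h).comp (M.map f.h)) := rfl
      _ = Z.pi.comp (M.map (g.h.comp f.h)) := by rw [← M.map_comp]⟩

/-- The free `M`-algebra over `A`, carried by `M A` with product `flat`. -/
def OMonad.free (M : OMonad) (A : Pos) : OAlg M :=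
  ⟨M.obj A, M.flat A, M.flat_sing A, (M.flat_assoc A).symm⟩

/- Sub-posets, products, relations as sub-posets of products. -/

def Pos.sub (A : Pos) (S : Set A.car) : Pos := ⟨{a : A.car // a ∈ S}, inferInstance⟩

def subIncl (A : Pos) (S : Set A.car) : PHom (A.sub S) A := ⟨fun a => a.val, fun _ _ h => h⟩

def Pos.prod (A B : Pos) : Pos := ⟨A.car × B.car, inferInstance⟩

def prodFst (A B : Pos) : PHom (A.prod B) A := ⟨Prod.fst, fun _ _ h => h.1⟩
def prodSnd (A B : Pos) : PHom (A.prod B) B := ⟨Prod.snd, fun _ _ h => h.2⟩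

/-- A relation `r` on `A`, as a sub-poset of `A × A`. -/
def relPos (A : Pos) (r : A.car → A.car → Prop) : Pos :=
  ⟨{p : A.car × A.car // r p.1 p.2}, inferInstance⟩

def relFst (A : Pos) (r : A.car → A.car → Prop) : PHom (relPos A r) A :=
  ⟨fun p => p.val.1, fun _ _ h => h.1⟩
def relSnd (A : Pos) (r : A.car → A.car → Prop) : PHom (relPos A r) A :=
  ⟨fun p => p.val.2, fun _ _ h => h.2⟩

/- The standing convention on the monad `M`. -/

def PreservesInj (M : OMonad) : Prop :=
  ∀ {A B : Pos} (f : PHom A B), Function.Injective f.f → Function.Injective (M.map f).f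
def PreservesSurj (M : OMonad) : Prop :=
  ∀ {A B : Pos} (f : PHom A B), Function.Surjective f.f → Function.Surjective (M.map f).f
def PreservesBij (M : OMonad) : Prop :=
  ∀ {A B : Pos} (f : PHom A B), Function.Bijective f.f → Function.Bijective (M.map f).f
def PreservesPre (M : OMonad) : Prop :=
  ∀ {A B : Pos} (f : PHom A B) (S : Set B.car),
    Set.range (M.map (subIncl A (f.f ⁻¹' S))).f
      = (M.map f).f ⁻¹' Set.range (M.map (subIncl B S)).f

/-- `M` uses the standard ordering: the order on `M A` is the lift of the order on `A`. -/
def UsesStdOrder (M : OMonad) : Prop :=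
  ∀ (A : Pos) (s t : (M.obj A).car),
    s ≤ t ↔ ∃ u : (M.obj (relPos A (fun a b => a ≤ b))).car,
      (M.map (relFst A (fun a b => a ≤ b))).f u = s ∧
      (M.map (relSnd A (fun a b => a ≤ b))).f u = t

/-- The standing convention of the paper. -/
def Convention (M : OMonad) : Prop :=
  PreservesInj M ∧ PreservesSurj M ∧ PreservesBij M ∧ PreservesPre M ∧ UsesStdOrder M

/- Quotients by preorders containing the order. -/

/-- A preorder on (the carrier of) `A` containing the partial order of `A`. -/
structure PreCong (A : Pos) where
  r : A.car → A.car → Prop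
  refl : ∀ a, r a a
  trans : ∀ a b c, r a b → r b c → r a c
  le_sub : ∀ a b : A.car, a ≤ b → r a b

def PreCong.setoid {A : Pos} (co : PreCong A) : Setoid A.car where
  r a b := co.r a b ∧ co.r b a
  iseqv := ⟨fun a => ⟨co.refl a, co.refl a⟩, fun h => ⟨h.2, h.1⟩,
    fun h1 h2 => ⟨co.trans _ _ _ h1.1 h2.1, co.trans _ _ _ h2.2 h1.2⟩⟩

/-- The quotient poset `A/⊑`. -/
def quotPos {A : Pos} (co : PreCong A) : Pos where
  car := Quotient co.setoid
  po :=
    { le := Quotient.lift₂ co.r (fun a b a' b' ha hb => propext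
        ⟨fun h => co.trans _ _ _ ha.2 (co.trans _ _ _ h hb.1),
         fun h => co.trans _ _ _ ha.1 (co.trans _ _ _ h hb.2)⟩)
      le_refl := fun q => Quotient.inductionOn q co.refl
      le_trans := by
        intro q1 q2 q3
        refine Quotient.inductionOn₃ q1 q2 q3 ?_
        intro a b d h1 h2
        exact co.trans a b d h1 h2
      le_antisymm := by
        intro q1 q2
        refine Quotient.inductionOn₂ q1 q2 ?_
        intro a b h1 h2
        exact Quotient.sound ⟨h1, h2⟩
      lt := fun x y => Quotient.lift₂ (s₁ := co.setoid) (s₂ := co.setoid) co.r (fun a b a' b' ha hb => propext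
          ⟨fun h => co.trans _ _ _ ha.2 (co.trans _ _ _ h hb.1),
           fun h => co.trans _ _ _ ha.1 (co.trans _ _ _ h hb.2)⟩) x y ∧
          ¬ Quotient.lift₂ (s₁ := co.setoid) (s₂ := co.setoid) co.r (fun a b a' b' ha hb => propext
          ⟨fun h => co.trans _ _ _ ha.2 (co.trans _ _ _ h hb.1),
           fun h => co.trans _ _ _ ha.1 (co.trans _ _ _ h hb.2)⟩) y x }

/-- The quotient map `A → A/⊑`. -/
def quotHom {A : Pos} (co : PreCong A) : PHom A (quotPos co) :=
  ⟨fun a => Quotient.mk co.setoid a, fun a b h => co.le_sub a b h⟩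

/-- `⊑` is a congruence ordering on the algebra `X`:
`s ⊑_M t` (i.e. `M q (s) ≤ M q (t)`) implies `π(s) ⊑ π(t)`. -/
def IsCongOrdP (M : OMonad) (X : OAlg M) (co : PreCong X.A) : Prop :=
  ∀ s t : (M.obj X.A).car,
    (M.map (quotHom co)).f s ≤ (M.map (quotHom co)).f t → co.r (X.pi.f s) (X.pi.f t)

/-- The relation `r` is a congruence ordering on the algebra `X`. -/
def IsCongruenceOrdering (M : OMonad) (X : OAlg M) (r : X.A.car → X.A.car → Prop) : Prop :=
  ∃ (h1 : ∀ a, r a a) (h2 : ∀ a b c, r a b → r b c → r a c)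
    (h3 : ∀ a b : X.A.car, a ≤ b → r a b),
    IsCongOrdP M X ⟨r, h1, h2, h3⟩

/- Contexts and syntactic congruences. -/

/-- `A + □`: the poset `A` extended by a single extra point `□`. -/
def Pos.addBox (A : Pos) : Pos := ⟨A.car ⊕ PUnit, inferInstance⟩

/-- The map `A + □ → A` substituting `a` for `□`. -/
def substHom (M : OMonad) (X : OAlg M) (a : X.A.car) : PHom X.A.addBox X.A :=
  ⟨fun z => Sum.elim (fun x => x) (fun _ => a) z, by
    intro x y h
    cases h with
    | inl h => exact h
    | inr h => exact le_refl a⟩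

/-- Evaluation `p[a]` of a context `p ∈ M(A + □)` at `a ∈ A`. -/
def ctxEval (M : OMonad) (X : OAlg M) (p : (M.obj X.A.addBox).car) (a : X.A.car) : X.A.car :=
  X.pi.f ((M.map (substHom M X a)).f p)

/-- The syntactic congruence `a ≼_K b` of a set `K`. -/
def synLe (M : OMonad) (X : OAlg M) (K : Set X.A.car) (a b : X.A.car) : Prop :=
  ∀ p : (M.obj X.A.addBox).car, ctxEval M X p a ∈ K → ctxEval M X p b ∈ K

def UpClosed (A : Pos) (K : Set A.car) : Prop :=
  ∀ a b : A.car, a ∈ K → a ≤ b → b ∈ K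

/-- The derivative `p⁻¹[K]` of `K` by the context `p`. -/
def ctxDeriv (M : OMonad) (X : OAlg M) (p : (M.obj X.A.addBox).car) (K : Set X.A.car) :
    Set X.A.car :=
  {a | ctxEval M X p a ∈ K}

/-- `A` carries the trivial (discrete) order. -/
def TrivOrder (A : Pos) : Prop := ∀ a b : A.car, a ≤ b → a = b

/-- A morphism from a free algebra recognises a language `K` if `K` is the preimage of
an upwards closed set. -/
def Recognises {M : OMonad} {Sg : Pos} {X : OAlg M} (φ : OAlgHom (M.free Sg) X)
    (K : Set ((M.obj Sg).car)) : Prop :=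
  ∃ P : Set X.A.car, UpClosed X.A P ∧ K = φ.h.f ⁻¹' P

/-- Embedding of `Σ + □` into `(M Σ) + □` via `sing`, used to view contexts over the
alphabet as contexts over the free algebra. -/
def singBox (M : OMonad) (Sg : Pos) : PHom Sg.addBox (M.obj Sg).addBox :=
  ⟨Sum.map (M.sing Sg).f (fun x => x), by
    intro x y h
    cases h with
    | inl h => exact Sum.LiftRel.inl ((M.sing Sg).mono h)
    | inr h => exact Sum.LiftRel.inr h⟩

/-- Evaluation of a context `p ∈ M(Σ + □)` at an element `s ∈ M Σ` of the free algebra. -/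
def freeCtxEval (M : OMonad) (Sg : Pos) (p : (M.obj Sg.addBox).car) (s : (M.obj Sg).car) :
    (M.obj Sg).car :=
  ctxEval M (M.free Sg) ((M.map (singBox M Sg)).f p) s

/- Finitary monads and algebras. -/

/-- `M` is finitary: it preserves directed unions. -/
def FinitaryM (M : OMonad) : Prop :=
  ∀ (A : Pos) (ι : Type) (D : ι → Set A.car), Directed (· ⊆ ·) D → (⋃ i, D i) = Set.univ →
    ∀ s : (M.obj A).car, ∃ i, ∃ s₀ : (M.obj (A.sub (D i))).car,
      (M.map (subIncl A (D i))).f s₀ = s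

/-- A finitary algebra: (sort-wise) finite universe and finitely generated. -/
def FinitaryAlg (M : OMonad) (X : OAlg M) : Prop :=
  Finite X.A.car ∧ ∃ C : Set X.A.car, C.Finite ∧
    ∀ a : X.A.car, ∃ s : (M.obj (X.A.sub C)).car, a = X.pi.f ((M.map (subIncl X.A C)).f s)
/-- A morphism of monads `M₀ ⇒ M₁`. -/
structure OMonadHom (M₀ M₁ : OMonad) where
  app : ∀ A : Pos, PHom (M₀.obj A) (M₁.obj A)
  naturality : ∀ {A B : Pos} (f : PHom A B),
      (app B).comp (M₀.map f) = (M₁.map f).comp (app A)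
  sing_comm : ∀ A : Pos, (app A).comp (M₀.sing A) = M₁.sing A
  flat_comm : ∀ A : Pos,
      (app A).comp (M₀.flat A)
        = (M₁.flat A).comp ((app (M₁.obj A)).comp (M₀.map (app A)))

/-- The `ρ`-reduct of an `M₁`-algebra: the `M₀`-algebra with product `π ∘ ρ`. -/
def OMonadHom.reduct {M₀ M₁ : OMonad} (ρ : OMonadHom M₀ M₁) (X : OAlg M₁) : OAlg M₀ where
  A := X.A
  pi := X.pi.comp (ρ.app X.A)
  unit_law := by
    calc (X.pi.comp (ρ.app X.A)).comp (M₀.sing X.A)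
        = X.pi.comp ((ρ.app X.A).comp (M₀.sing X.A)) := rfl
      _ = X.pi.comp (M₁.sing X.A) := by rw [ρ.sing_comm]
      _ = PHom.id X.A := X.unit_law
  assoc_law := by
    have hnat := ρ.naturality (X.pi.comp (ρ.app X.A))
    have hint := ρ.naturality (ρ.app X.A)
    calc (X.pi.comp (ρ.app X.A)).comp (M₀.map (X.pi.comp (ρ.app X.A)))
        = X.pi.comp ((ρ.app X.A).comp (M₀.map (X.pi.comp (ρ.app X.A)))) := rfl
      _ = X.pi.comp ((M₁.map (X.pi.comp (ρ.app X.A))).comp (ρ.app (M₀.obj X.A))) := by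
            rw [hnat]
      _ = (X.pi.comp (M₁.map (X.pi.comp (ρ.app X.A)))).comp (ρ.app (M₀.obj X.A)) := rfl
      _ = (X.pi.comp ((M₁.map X.pi).comp (M₁.map (ρ.app X.A)))).comp (ρ.app (M₀.obj X.A)) := by
            rw [M₁.map_comp]
      _ = ((X.pi.comp (M₁.map X.pi)).comp (M₁.map (ρ.app X.A))).comp (ρ.app (M₀.obj X.A)) := rfl
      _ = ((X.pi.comp (M₁.flat X.A)).comp (M₁.map (ρ.app X.A))).comp (ρ.app (M₀.obj X.A)) := by
            rw [X.assoc_law]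
      _ = X.pi.comp ((M₁.flat X.A).comp ((M₁.map (ρ.app X.A)).comp (ρ.app (M₀.obj X.A)))) := rfl
      _ = X.pi.comp ((M₁.flat X.A).comp ((ρ.app (M₁.obj X.A)).comp (M₀.map (ρ.app X.A)))) := by
            rw [hint]
      _ = X.pi.comp ((ρ.app X.A).comp (M₀.flat X.A)) := by rw [← ρ.flat_comm]
      _ = (X.pi.comp (ρ.app X.A)).comp (M₀.flat X.A) := rfl

/-- `ρ : M₀ ⇒ M₁` is dense over the class `C`. -/
def DenseOver {M₀ M₁ : OMonad} (ρ : OMonadHom M₀ M₁) (C : Set (OAlg M₁)) : Prop :=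
  ∀ X ∈ C, ∀ (S : Set X.A.car) (s : (M₁.obj (X.A.sub S)).car),
    ∃ s₀ : (M₀.obj (X.A.sub S)).car,
      X.pi.f ((ρ.app X.A).f ((M₀.map (subIncl X.A S)).f s₀))
        = X.pi.f ((M₁.map (subIncl X.A S)).f s)

/-- `P` is a binary product of `A` and `B` in the category of `M`-algebras
(concretely: the projections induce an order isomorphism with the product poset). -/
def IsBinProd (M : OMonad) (P A B : OAlg M) : Prop :=
  ∃ (pa : OAlgHom P A) (pb : OAlgHom P B),
    Function.Bijective (fun x => (pa.h.f x, pb.h.f x)) ∧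
    ∀ x y : P.A.car, x ≤ y ↔ (pa.h.f x ≤ pa.h.f y ∧ pb.h.f x ≤ pb.h.f y)

/-- Closure of a class of algebras under binary products. -/
inductive InProdClosure (M : OMonad) (C : Set (OAlg M)) : OAlg M → Prop
  | base : ∀ A ∈ C, InProdClosure M C A
  | prod : ∀ A B P, InProdClosure M C A → InProdClosure M C B →
      IsBinProd M P A B → InProdClosure M C P

/-- `P` is a product of the family `A` of `M`-algebras. -/
def IsProdOf (M : OMonad) (P : OAlg M) {I : Type} (A : I → OAlg M) : Prop :=
  ∃ p : ∀ i, OAlgHom P (A i),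
    Function.Bijective (fun (x : P.A.car) (i : I) => (p i).h.f x) ∧
    ∀ x y : P.A.car, x ≤ y ↔ ∀ i, (p i).h.f x ≤ (p i).h.f y

/-- `B` is a quotient of `A`. -/
def IsQuotientOf (M : OMonad) (B A : OAlg M) : Prop :=
  ∃ φ : OAlgHom A B, Function.Surjective φ.h.f

/-- `B` is a subalgebra of `A` (an order embedding which is a morphism). -/
def IsSubalgebraOf (M : OMonad) (B A : OAlg M) : Prop :=
  ∃ φ : OAlgHom B A, ∀ x y : B.A.car, φ.h.f x ≤ φ.h.f y ↔ x ≤ y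

/-- A pseudo-variety (here with a single sort): a class of finitary algebras closed
under quotients, finitary subalgebras of finite products, and (the single-sorted
instance of) sort-accumulation points. -/
def PseudoVariety (M : OMonad) (V : Set (OAlg M)) : Prop :=
  (∀ X ∈ V, FinitaryAlg M X) ∧
  (∀ A ∈ V, ∀ B, IsQuotientOf M B A → B ∈ V) ∧
  (∀ (n : ℕ) (A : Fin n → OAlg M), (∀ i, A i ∈ V) →
    ∀ P, IsProdOf M P A → ∀ B, FinitaryAlg M B → IsSubalgebraOf M B P → B ∈ V) ∧
  (∀ B, FinitaryAlg M B → (∃ A ∈ V, IsQuotientOf M A B) → B ∈ V)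

/-- The inclusion of a relation, as a sub-poset, into the product poset. -/
def relIncl (A : Pos) (r : A.car → A.car → Prop) : PHom (relPos A r) (A.prod A) :=
  ⟨fun p => p.val, fun _ _ h => h⟩

/- ============================================================================ -/
/- Auxiliary material for the proof of `dense_reducts`.                          -/
/- ============================================================================ -/

theorem PHom.ext' {A B : Pos} {f g : PHom A B} (h : ∀ a, f.f a = g.f a) : f = g := by
  cases f with
  | mk ff fm =>
    cases g with
    | mk gf gm =>
      have hfg : ff = gf := funext h
      subst hfg
      rfl

theorem omap_comp_apply (M : OMonad) {A B C : Pos} (f : PHom A B) (g : PHom B C)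
    (x : (M.obj A).car) :
    (M.map (g.comp f)).f x = (M.map g).f ((M.map f).f x) := by
  rw [M.map_comp]; rfl

theorem ohom_nat_apply {M₀ M₁ : OMonad} (ρ : OMonadHom M₀ M₁) {A B : Pos} (f : PHom A B)
    (x : (M₀.obj A).car) :
    (ρ.app B).f ((M₀.map f).f x) = (M₁.map f).f ((ρ.app A).f x) :=
  congrFun (congrArg PHom.f (ρ.naturality f)) x

theorem oalg_comm_apply {M : OMonad} {P X : OAlg M} (φ : OAlgHom P X) (z : (M.obj P.A).car) :
    φ.h.f (P.pi.f z) = X.pi.f ((M.map φ.h).f z) :=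
  congrFun (congrArg PHom.f φ.comm) z

/-- Pointwise comparable monotone maps have pointwise comparable `M`-images
(the "standard order" trick). -/
theorem omap_le_map {M : OMonad} (hstd : UsesStdOrder M) {A B : Pos} (f g : PHom A B)
    (hfg : ∀ x, f.f x ≤ g.f x) (v : (M.obj A).car) :
    (M.map f).f v ≤ (M.map g).f v := by
  apply (hstd B _ _).2
  refine ⟨(M.map (⟨fun x => ⟨(f.f x, g.f x), hfg x⟩,
    fun x y hxy => Subtype.mk_le_mk.mpr (Prod.mk_le_mk.mpr ⟨f.mono hxy, g.mono hxy⟩)⟩ :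
      PHom A (relPos B (fun a b => a ≤ b)))).f v, ?_, ?_⟩
  · rw [← omap_comp_apply]
    have e : (relFst B (fun a b => a ≤ b)).comp
        (⟨fun x => ⟨(f.f x, g.f x), hfg x⟩,
          fun x y hxy => Subtype.mk_le_mk.mpr (Prod.mk_le_mk.mpr ⟨f.mono hxy, g.mono hxy⟩)⟩ :
            PHom A (relPos B (fun a b => a ≤ b))) = f := PHom.ext' fun _ => rfl
    rw [e]
  · rw [← omap_comp_apply]
    have e : (relSnd B (fun a b => a ≤ b)).comp
        (⟨fun x => ⟨(f.f x, g.f x), hfg x⟩,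
          fun x y hxy => Subtype.mk_le_mk.mpr (Prod.mk_le_mk.mpr ⟨f.mono hxy, g.mono hxy⟩)⟩ :
            PHom A (relPos B (fun a b => a ≤ b))) = g := PHom.ext' fun _ => rfl
    rw [e]

section Collage

variable (A Q : Pos) (q : PHom A Q)

/-- Carrier of the collage poset `A ⊕ Q ⊕ Q ⊕ A`. -/
abbrev CT : Type := (A.car ⊕ Q.car) ⊕ (Q.car ⊕ A.car)

def cin0 (a : A.car) : CT A Q := Sum.inl (Sum.inl a)
def cin1 (c : Q.car) : CT A Q := Sum.inl (Sum.inr c)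
def cin2 (c : Q.car) : CT A Q := Sum.inr (Sum.inl c)
def cin3 (a : A.car) : CT A Q := Sum.inr (Sum.inr a)

/-- The collage order: within each copy the native order, and across copies
(only upward in level) comparison of the images in `Q`. -/
def Cle : CT A Q → CT A Q → Prop
  | Sum.inl (Sum.inl a), Sum.inl (Sum.inl a') => a ≤ a'
  | Sum.inl (Sum.inl a), Sum.inl (Sum.inr c) => q.f a ≤ c
  | Sum.inl (Sum.inl a), Sum.inr (Sum.inl c) => q.f a ≤ c
  | Sum.inl (Sum.inl a), Sum.inr (Sum.inr b) => q.f a ≤ q.f b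
  | Sum.inl (Sum.inr c), Sum.inl (Sum.inr c') => c ≤ c'
  | Sum.inl (Sum.inr c), Sum.inr (Sum.inl d) => c ≤ d
  | Sum.inl (Sum.inr c), Sum.inr (Sum.inr b) => c ≤ q.f b
  | Sum.inr (Sum.inl d), Sum.inr (Sum.inl d') => d ≤ d'
  | Sum.inr (Sum.inl d), Sum.inr (Sum.inr b) => d ≤ q.f b
  | Sum.inr (Sum.inr b), Sum.inr (Sum.inr b') => b ≤ b'
  | _, _ => False

/-- The collage poset. -/
def CPos : Pos where
  car := CT A Q
  po :=
    { le := Cle A Q q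
      lt := fun x y => Cle A Q q x y ∧ ¬ Cle A Q q y x
      lt_iff_le_not_ge := fun _ _ => Iff.rfl
      le_refl := fun x => by
        rcases x with (a | c) | (c | a) <;> exact le_refl _
      le_trans := fun x y z hxy hyz => by
        rcases x with (a | c) | (c | a) <;> rcases y with (a' | c') | (c' | a') <;>
          rcases z with (a'' | c'') | (c'' | a'') <;>
          first
            | exact False.elim hxy
            | exact False.elim hyz
            | exact le_trans hxy hyz
            | exact le_trans (q.mono hxy) hyz
            | exact le_trans hxy (q.mono hyz)
            | exact le_trans (q.mono hxy) (q.mono hyz)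
      le_antisymm := fun x y hxy hyx => by
        rcases x with (a | c) | (c | a) <;> rcases y with (a' | c') | (c' | a') <;>
          first
            | exact False.elim hxy
            | exact False.elim hyx
            | rw [le_antisymm hxy hyx] }

def ci0 : PHom A (CPos A Q q) := ⟨cin0 A Q, fun _ _ h => h⟩
def ci3 : PHom A (CPos A Q q) := ⟨cin3 A Q, fun _ _ h => h⟩
def cm1 : PHom Q (CPos A Q q) := ⟨cin1 A Q, fun _ _ h => h⟩
def cm2 : PHom Q (CPos A Q q) := ⟨cin2 A Q, fun _ _ h => h⟩

def cL1 : PHom A (relPos (CPos A Q q) (fun a b => a ≤ b)) :=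
  ⟨fun a => ⟨(cin0 A Q a, cin1 A Q (q.f a)), le_refl (q.f a)⟩,
    fun a a' h => ⟨h, q.mono h⟩⟩

def cL2 : PHom (relPos Q (fun a b => a ≤ b)) (relPos (CPos A Q q) (fun a b => a ≤ b)) :=
  ⟨fun z => ⟨(cin1 A Q z.val.1, cin2 A Q z.val.2), z.property⟩,
    fun z z' h => ⟨(Prod.le_def.1 h).1, (Prod.le_def.1 h).2⟩⟩

def cL3 : PHom A (relPos (CPos A Q q) (fun a b => a ≤ b)) :=
  ⟨fun b => ⟨(cin2 A Q (q.f b), cin3 A Q b), le_refl (q.f b)⟩,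
    fun b b' h => ⟨q.mono h, h⟩⟩

/-- The first (bottom) copy of `A` inside the collage. -/
def CSl : Set (CT A Q) := fun x => ∃ a : A.car, x = cin0 A Q a
/-- The last (top) copy of `A` inside the collage. -/
def CSr : Set (CT A Q) := fun x => ∃ b : A.car, x = cin3 A Q b

def cκ0 : PHom A ((CPos A Q q).sub (CSl A Q)) :=
  ⟨fun a => ⟨cin0 A Q a, ⟨a, rfl⟩⟩, fun _ _ h => h⟩
def cκ3 : PHom A ((CPos A Q q).sub (CSr A Q)) :=
  ⟨fun b => ⟨cin3 A Q b, ⟨b, rfl⟩⟩, fun _ _ h => h⟩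

/-- Pairs whose first component lies in the bottom copy. -/
def CT₁ : Set (relPos (CPos A Q q) (fun a b => a ≤ b)).car :=
  (relFst (CPos A Q q) (fun a b => a ≤ b)).f ⁻¹' (CSl A Q)

/-- Among those, pairs whose second component lies in the top copy. -/
def CT₂ : Set ((relPos (CPos A Q q) (fun a b => a ≤ b)).sub (CT₁ A Q q)).car :=
  ((relSnd (CPos A Q q) (fun a b => a ≤ b)).comp
    (subIncl (relPos (CPos A Q q) (fun a b => a ≤ b)) (CT₁ A Q q))).f ⁻¹' (CSr A Q)

/-- The comma relation `q a ≤ q b` on `A`. -/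
def CR : A.car → A.car → Prop := fun a b => q.f a ≤ q.f b

noncomputable def cexA (x : (((relPos (CPos A Q q) (fun a b => a ≤ b)).sub (CT₁ A Q q)).sub (CT₂ A Q q)).car) :
    A.car :=
  (show ∃ a : A.car, x.val.val.val.1 = cin0 A Q a from x.val.property).choose

noncomputable def cexB (x : (((relPos (CPos A Q q) (fun a b => a ≤ b)).sub (CT₁ A Q q)).sub (CT₂ A Q q)).car) :
    A.car :=
  (show ∃ b : A.car, x.val.val.val.2 = cin3 A Q b from x.property).choose

theorem cexA_spec (x) : x.val.val.val.1 = cin0 A Q (cexA A Q q x) :=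
  (show ∃ a : A.car, x.val.val.val.1 = cin0 A Q a from x.val.property).choose_spec

theorem cexB_spec (x) : x.val.val.val.2 = cin3 A Q (cexB A Q q x) :=
  (show ∃ b : A.car, x.val.val.val.2 = cin3 A Q b from x.property).choose_spec

/-- Reading off a cross pair of the collage as a pair for the comma relation. -/
noncomputable def Cν : PHom (((relPos (CPos A Q q) (fun a b => a ≤ b)).sub (CT₁ A Q q)).sub (CT₂ A Q q))
    (relPos A (CR A Q q)) where
  f x := ⟨(cexA A Q q x, cexB A Q q x), by
    have hle : x.val.val.val.1 ≤ x.val.val.val.2 := x.val.val.property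
    rw [cexA_spec A Q q x, cexB_spec A Q q x] at hle
    exact hle⟩
  mono := by
    intro x y hxy
    have h' : x.val.val.val ≤ y.val.val.val := hxy
    have h1 := (Prod.le_def.1 h').1
    have h2 := (Prod.le_def.1 h').2
    rw [cexA_spec A Q q x, cexA_spec A Q q y] at h1
    rw [cexB_spec A Q q x, cexB_spec A Q q y] at h2
    exact ⟨h1, h2⟩

end Collage

/-- The key exactness lemma: if `M q s ≤ M q t` then the pair `(s, t)` lifts exactly
to `M` of the comma relation of `q`. -/
theorem collage_exact (M : OMonad) (hpre : PreservesPre M) (hinjP : PreservesInj M)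
    (hstd : UsesStdOrder M) (A Q : Pos) (q : PHom A Q) (s t : (M.obj A).car)
    (h : (M.map q).f s ≤ (M.map q).f t) :
    ∃ w : (M.obj (relPos A (CR A Q q))).car,
      (M.map (relFst A (CR A Q q))).f w = s ∧ (M.map (relSnd A (CR A Q q))).f w = t := by
  classical
  obtain ⟨u, hu1, hu2⟩ := (hstd Q _ _).1 h
  have step1 : (M.map (ci0 A Q q)).f s ≤ (M.map ((cm1 A Q q).comp q)).f s := by
    apply (hstd (CPos A Q q) _ _).2
    refine ⟨(M.map (cL1 A Q q)).f s, ?_, ?_⟩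
    · rw [← omap_comp_apply]
      have e : (relFst (CPos A Q q) (fun a b => a ≤ b)).comp (cL1 A Q q) = ci0 A Q q :=
        PHom.ext' fun _ => rfl
      rw [e]
    · rw [← omap_comp_apply]
      have e : (relSnd (CPos A Q q) (fun a b => a ≤ b)).comp (cL1 A Q q)
          = (cm1 A Q q).comp q := PHom.ext' fun _ => rfl
      rw [e]
  have step2 : (M.map ((cm1 A Q q).comp q)).f s ≤ (M.map ((cm2 A Q q).comp q)).f t := by
    apply (hstd (CPos A Q q) _ _).2
    refine ⟨(M.map (cL2 A Q q)).f u, ?_, ?_⟩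
    · rw [← omap_comp_apply]
      have e : (relFst (CPos A Q q) (fun a b => a ≤ b)).comp (cL2 A Q q)
          = (cm1 A Q q).comp (relFst Q (fun a b => a ≤ b)) := PHom.ext' fun _ => rfl
      rw [e, omap_comp_apply, hu1, ← omap_comp_apply]
    · rw [← omap_comp_apply]
      have e : (relSnd (CPos A Q q) (fun a b => a ≤ b)).comp (cL2 A Q q)
          = (cm2 A Q q).comp (relSnd Q (fun a b => a ≤ b)) := PHom.ext' fun _ => rfl
      rw [e, omap_comp_apply, hu2, ← omap_comp_apply]
  have step3 : (M.map ((cm2 A Q q).comp q)).f t ≤ (M.map (ci3 A Q q)).f t := by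
    apply (hstd (CPos A Q q) _ _).2
    refine ⟨(M.map (cL3 A Q q)).f t, ?_, ?_⟩
    · rw [← omap_comp_apply]
      have e : (relFst (CPos A Q q) (fun a b => a ≤ b)).comp (cL3 A Q q)
          = (cm2 A Q q).comp q := PHom.ext' fun _ => rfl
      rw [e]
    · rw [← omap_comp_apply]
      have e : (relSnd (CPos A Q q) (fun a b => a ≤ b)).comp (cL3 A Q q) = ci3 A Q q :=
        PHom.ext' fun _ => rfl
      rw [e]
  obtain ⟨uu, hw1, hw2⟩ :=
    (hstd (CPos A Q q) _ _).1 (le_trans (le_trans step1 step2) step3)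
  -- first cut: the first components lie in the bottom copy
  have hmem1 : uu ∈ Set.range
      (M.map (subIncl (relPos (CPos A Q q) (fun a b => a ≤ b)) (CT₁ A Q q))).f := by
    show uu ∈ Set.range (M.map (subIncl (relPos (CPos A Q q) (fun a b => a ≤ b))
      ((relFst (CPos A Q q) (fun a b => a ≤ b)).f ⁻¹' (CSl A Q)))).f
    rw [hpre (relFst (CPos A Q q) (fun a b => a ≤ b)) (CSl A Q)]
    show (M.map (relFst (CPos A Q q) (fun a b => a ≤ b))).f uu
      ∈ Set.range (M.map (subIncl (CPos A Q q) (CSl A Q))).f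
    rw [hw1]
    refine ⟨(M.map (cκ0 A Q q)).f s, ?_⟩
    rw [← omap_comp_apply]
    have e : (subIncl (CPos A Q q) (CSl A Q)).comp (cκ0 A Q q) = ci0 A Q q :=
      PHom.ext' fun _ => rfl
    rw [e]
  obtain ⟨uu1, huu1⟩ := hmem1
  -- second cut: the second components lie in the top copy
  have hmem2 : uu1 ∈ Set.range
      (M.map (subIncl ((relPos (CPos A Q q) (fun a b => a ≤ b)).sub (CT₁ A Q q))
        (CT₂ A Q q))).f := by
    show uu1 ∈ Set.range (M.map (subIncl
      ((relPos (CPos A Q q) (fun a b => a ≤ b)).sub (CT₁ A Q q))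
      (((relSnd (CPos A Q q) (fun a b => a ≤ b)).comp
        (subIncl (relPos (CPos A Q q) (fun a b => a ≤ b)) (CT₁ A Q q))).f ⁻¹' (CSr A Q)))).f
    rw [hpre ((relSnd (CPos A Q q) (fun a b => a ≤ b)).comp
      (subIncl (relPos (CPos A Q q) (fun a b => a ≤ b)) (CT₁ A Q q))) (CSr A Q)]
    show (M.map ((relSnd (CPos A Q q) (fun a b => a ≤ b)).comp
      (subIncl (relPos (CPos A Q q) (fun a b => a ≤ b)) (CT₁ A Q q)))).f uu1
      ∈ Set.range (M.map (subIncl (CPos A Q q) (CSr A Q))).f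
    rw [omap_comp_apply, huu1, hw2]
    refine ⟨(M.map (cκ3 A Q q)).f t, ?_⟩
    rw [← omap_comp_apply]
    have e : (subIncl (CPos A Q q) (CSr A Q)).comp (cκ3 A Q q) = ci3 A Q q :=
      PHom.ext' fun _ => rfl
    rw [e]
  obtain ⟨uu2, huu2⟩ := hmem2
  refine ⟨(M.map (Cν A Q q)).f uu2, ?_, ?_⟩
  · apply hinjP (ci0 A Q q) (fun a a' hh => Sum.inl_injective (Sum.inl_injective hh))
    have ckey : (ci0 A Q q).comp ((relFst A (CR A Q q)).comp (Cν A Q q))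
        = (relFst (CPos A Q q) (fun a b => a ≤ b)).comp
          ((subIncl (relPos (CPos A Q q) (fun a b => a ≤ b)) (CT₁ A Q q)).comp
            (subIncl ((relPos (CPos A Q q) (fun a b => a ≤ b)).sub (CT₁ A Q q)) (CT₂ A Q q))) :=
      PHom.ext' fun x => (cexA_spec A Q q x).symm
    calc (M.map (ci0 A Q q)).f ((M.map (relFst A (CR A Q q))).f ((M.map (Cν A Q q)).f uu2))
        = (M.map ((ci0 A Q q).comp ((relFst A (CR A Q q)).comp (Cν A Q q)))).f uu2 := by
          rw [omap_comp_apply, omap_comp_apply]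
      _ = (M.map ((relFst (CPos A Q q) (fun a b => a ≤ b)).comp
            ((subIncl (relPos (CPos A Q q) (fun a b => a ≤ b)) (CT₁ A Q q)).comp
              (subIncl ((relPos (CPos A Q q) (fun a b => a ≤ b)).sub (CT₁ A Q q))
                (CT₂ A Q q))))).f uu2 := by rw [ckey]
      _ = (M.map (relFst (CPos A Q q) (fun a b => a ≤ b))).f uu := by
          rw [omap_comp_apply, omap_comp_apply, huu2, huu1]
      _ = (M.map (ci0 A Q q)).f s := hw1
  · apply hinjP (ci3 A Q q) (fun a a' hh => Sum.inr_injective (Sum.inr_injective hh))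
    have ckey : (ci3 A Q q).comp ((relSnd A (CR A Q q)).comp (Cν A Q q))
        = (relSnd (CPos A Q q) (fun a b => a ≤ b)).comp
          ((subIncl (relPos (CPos A Q q) (fun a b => a ≤ b)) (CT₁ A Q q)).comp
            (subIncl ((relPos (CPos A Q q) (fun a b => a ≤ b)).sub (CT₁ A Q q)) (CT₂ A Q q))) :=
      PHom.ext' fun x => (cexB_spec A Q q x).symm
    calc (M.map (ci3 A Q q)).f ((M.map (relSnd A (CR A Q q))).f ((M.map (Cν A Q q)).f uu2))
        = (M.map ((ci3 A Q q).comp ((relSnd A (CR A Q q)).comp (Cν A Q q)))).f uu2 := by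
          rw [omap_comp_apply, omap_comp_apply]
      _ = (M.map ((relSnd (CPos A Q q) (fun a b => a ≤ b)).comp
            ((subIncl (relPos (CPos A Q q) (fun a b => a ≤ b)) (CT₁ A Q q)).comp
              (subIncl ((relPos (CPos A Q q) (fun a b => a ≤ b)).sub (CT₁ A Q q))
                (CT₂ A Q q))))).f uu2 := by rw [ckey]
      _ = (M.map (relSnd (CPos A Q q) (fun a b => a ≤ b))).f uu := by
          rw [omap_comp_apply, omap_comp_apply, huu2, huu1]
      _ = (M.map (ci3 A Q q)).f t := hw2

/-- Density transfer along a jointly-embedded span into a binary product in `C`. -/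
theorem density_span {M₀ M₁ : OMonad} (ρ : OMonadHom M₀ M₁) {C : Set (OAlg M₁)}
    (hdense : DenseOver ρ C) {X Y P : OAlg M₁} (hP : P ∈ C)
    (pa : OAlgHom P X) (pb : OAlgHom P Y)
    (hbij : Function.Bijective (fun x => (pa.h.f x, pb.h.f x)))
    (hord : ∀ x y : P.A.car, x ≤ y ↔ (pa.h.f x ≤ pa.h.f y ∧ pb.h.f x ≤ pb.h.f y))
    {V : Pos} (α : PHom V X.A) (β : PHom V Y.A)
    (hiff : ∀ v v' : V.car, v ≤ v' ↔ (α.f v ≤ α.f v' ∧ β.f v ≤ β.f v'))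
    (W : (M₁.obj V).car) :
    ∃ W₀ : (M₀.obj V).car,
      X.pi.f ((ρ.app X.A).f ((M₀.map α).f W₀)) = X.pi.f ((M₁.map α).f W) ∧
      Y.pi.f ((ρ.app Y.A).f ((M₀.map β).f W₀)) = Y.pi.f ((M₁.map β).f W) := by
  classical
  obtain ⟨inv, hinv⟩ : ∃ inv : X.A.car × Y.A.car → P.A.car,
      ∀ p, (pa.h.f (inv p), pb.h.f (inv p)) = p :=
    ⟨fun p => (hbij.surjective p).choose, fun p => (hbij.surjective p).choose_spec⟩
  set jf : V.car → P.A.car := fun v => inv (α.f v, β.f v) with hjf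
  have hpa : ∀ v, pa.h.f (jf v) = α.f v := fun v => congrArg Prod.fst (hinv (α.f v, β.f v))
  have hpb : ∀ v, pb.h.f (jf v) = β.f v := fun v => congrArg Prod.snd (hinv (α.f v, β.f v))
  have hjmono : ∀ v v' : V.car, v ≤ v' → jf v ≤ jf v' := by
    intro v v' h
    apply (hord _ _).2
    rw [hpa v, hpa v', hpb v, hpb v']
    exact (hiff v v').1 h
  set j : PHom V P.A := ⟨jf, fun v v' h => hjmono v v' h⟩ with hj
  set S : Set P.A.car := Set.range jf with hS
  set jhat : PHom V (P.A.sub S) := ⟨fun v => ⟨jf v, ⟨v, rfl⟩⟩, fun v v' h => hjmono v v' h⟩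
    with hjhat
  obtain ⟨W₀', hW₀'⟩ := hdense P hP S ((M₁.map jhat).f W)
  have hspec : ∀ x : (P.A.sub S).car, jf (Classical.choose x.property) = x.val :=
    fun x => Classical.choose_spec x.property
  have hemono : ∀ x y : (P.A.sub S).car, x ≤ y →
      Classical.choose x.property ≤ Classical.choose y.property := by
    intro x y hxy
    apply (hiff _ _).2
    have h1 : jf (Classical.choose x.property) ≤ jf (Classical.choose y.property) := by
      rw [hspec x, hspec y]; exact hxy
    have h2 := (hord _ _).1 h1
    rw [hpa, hpa, hpb, hpb] at h2
    exact h2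
  set e' : PHom (P.A.sub S) V :=
    ⟨fun x => Classical.choose x.property, fun x y h => hemono x y h⟩ with he'
  have c2 : (subIncl P.A S).comp jhat = j := PHom.ext' fun v => rfl
  refine ⟨(M₀.map e').f W₀', ?_, ?_⟩
  · have c1 : α.comp e' = pa.h.comp (subIncl P.A S) := by
      apply PHom.ext'
      intro x
      show α.f (Classical.choose x.property) = pa.h.f x.val
      exact (hpa _).symm.trans (congrArg pa.h.f (hspec x))
    have c3 : pa.h.comp j = α := PHom.ext' hpa
    calc X.pi.f ((ρ.app X.A).f ((M₀.map α).f ((M₀.map e').f W₀')))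
        = X.pi.f ((ρ.app X.A).f ((M₀.map (α.comp e')).f W₀')) := by rw [omap_comp_apply]
      _ = X.pi.f ((ρ.app X.A).f ((M₀.map (pa.h.comp (subIncl P.A S))).f W₀')) := by rw [c1]
      _ = X.pi.f ((ρ.app X.A).f ((M₀.map pa.h).f ((M₀.map (subIncl P.A S)).f W₀'))) := by
          rw [omap_comp_apply]
      _ = X.pi.f ((M₁.map pa.h).f ((ρ.app P.A).f ((M₀.map (subIncl P.A S)).f W₀'))) := by
          rw [ohom_nat_apply]
      _ = pa.h.f (P.pi.f ((ρ.app P.A).f ((M₀.map (subIncl P.A S)).f W₀'))) :=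
          (oalg_comm_apply pa _).symm
      _ = pa.h.f (P.pi.f ((M₁.map (subIncl P.A S)).f ((M₁.map jhat).f W))) := by rw [hW₀']
      _ = pa.h.f (P.pi.f ((M₁.map ((subIncl P.A S).comp jhat)).f W)) := by
          rw [omap_comp_apply]
      _ = pa.h.f (P.pi.f ((M₁.map j).f W)) := by rw [c2]
      _ = X.pi.f ((M₁.map pa.h).f ((M₁.map j).f W)) := oalg_comm_apply pa _
      _ = X.pi.f ((M₁.map (pa.h.comp j)).f W) := by rw [← omap_comp_apply]
      _ = X.pi.f ((M₁.map α).f W) := by rw [c3]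
  · have c1 : β.comp e' = pb.h.comp (subIncl P.A S) := by
      apply PHom.ext'
      intro x
      show β.f (Classical.choose x.property) = pb.h.f x.val
      exact (hpb _).symm.trans (congrArg pb.h.f (hspec x))
    have c3 : pb.h.comp j = β := PHom.ext' hpb
    calc Y.pi.f ((ρ.app Y.A).f ((M₀.map β).f ((M₀.map e').f W₀')))
        = Y.pi.f ((ρ.app Y.A).f ((M₀.map (β.comp e')).f W₀')) := by rw [omap_comp_apply]
      _ = Y.pi.f ((ρ.app Y.A).f ((M₀.map (pb.h.comp (subIncl P.A S))).f W₀')) := by rw [c1]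
      _ = Y.pi.f ((ρ.app Y.A).f ((M₀.map pb.h).f ((M₀.map (subIncl P.A S)).f W₀'))) := by
          rw [omap_comp_apply]
      _ = Y.pi.f ((M₁.map pb.h).f ((ρ.app P.A).f ((M₀.map (subIncl P.A S)).f W₀'))) := by
          rw [ohom_nat_apply]
      _ = pb.h.f (P.pi.f ((ρ.app P.A).f ((M₀.map (subIncl P.A S)).f W₀'))) :=
          (oalg_comm_apply pb _).symm
      _ = pb.h.f (P.pi.f ((M₁.map (subIncl P.A S)).f ((M₁.map jhat).f W))) := by rw [hW₀']
      _ = pb.h.f (P.pi.f ((M₁.map ((subIncl P.A S).comp jhat)).f W)) := by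
          rw [omap_comp_apply]
      _ = pb.h.f (P.pi.f ((M₁.map j).f W)) := by rw [c2]
      _ = Y.pi.f ((M₁.map pb.h).f ((M₁.map j).f W)) := oalg_comm_apply pb _
      _ = Y.pi.f ((M₁.map (pb.h.comp j)).f W) := by rw [← omap_comp_apply]
      _ = Y.pi.f ((M₁.map β).f W) := by rw [c3]

/-- Dense reducts.  Let `ρ : M₀ ⇒ M₁` be a morphism of monads that is dense over a
class `C` of `M₁`-algebras closed under binary products.  Then:
(a) any two algebras in `C` with the same `M₀`-reduct have equal products;
(b) every morphism of the `M₀`-reducts of two algebras of `C` is also a morphism of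
`M₁`-algebras;
(c) a relation is a congruence ordering on an algebra `X ∈ C` iff it is a congruence
ordering on the `M₀`-reduct of `X`. -/
theorem dense_reducts (M₀ M₁ : OMonad) (h₀ : Convention M₀) (h₁ : Convention M₁)
    (ρ : OMonadHom M₀ M₁) (C : Set (OAlg M₁))
    (hC : ∀ A ∈ C, ∀ B ∈ C, ∃ P ∈ C, IsBinProd M₁ P A B)
    (hdense : DenseOver ρ C) :
    (∀ (A : Pos) (p₁ p₂ : PHom (M₁.obj A) A)
        (u₁ : p₁.comp (M₁.sing A) = PHom.id A)
        (a₁ : p₁.comp (M₁.map p₁) = p₁.comp (M₁.flat A))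
        (u₂ : p₂.comp (M₁.sing A) = PHom.id A)
        (a₂ : p₂.comp (M₁.map p₂) = p₂.comp (M₁.flat A)),
        (⟨A, p₁, u₁, a₁⟩ : OAlg M₁) ∈ C → (⟨A, p₂, u₂, a₂⟩ : OAlg M₁) ∈ C →
        p₁.comp (ρ.app A) = p₂.comp (ρ.app A) → p₁ = p₂) ∧
    (∀ X ∈ C, ∀ Y ∈ C, ∀ φ : OAlgHom (ρ.reduct X) (ρ.reduct Y),
        φ.h.comp X.pi = Y.pi.comp (M₁.map φ.h)) ∧
    (∀ X ∈ C, ∀ r : X.A.car → X.A.car → Prop,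
        IsCongruenceOrdering M₁ X r ↔ IsCongruenceOrdering M₀ (ρ.reduct X) r) := by
  obtain ⟨hinj₁, hsurj₁, hbij₁, hpre₁, hstd₁⟩ := h₁
  obtain ⟨hinj₀, hsurj₀, hbij₀, hpre₀, hstd₀⟩ := h₀
  refine ⟨?_, ?_, ?_⟩
  · -- (a) uniqueness of algebra structures with a common reduct
    intro A p₁ p₂ u₁ a₁ u₂ a₂ hm₁ hm₂ hpp
    obtain ⟨P, hPC, pa, pb, hbij, hord⟩ := hC _ hm₁ _ hm₂
    apply PHom.ext'
    intro s
    obtain ⟨W₀, e₁, e₂⟩ := density_span ρ hdense hPC pa pb hbij hord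
      (PHom.id A) (PHom.id A) (fun v v' => ⟨fun h => ⟨h, h⟩, fun h => h.1⟩) s
    rw [M₀.map_id, M₁.map_id] at e₁ e₂
    calc p₁.f s
        = (⟨A, p₁, u₁, a₁⟩ : OAlg M₁).pi.f ((PHom.id (M₁.obj A)).f s) := rfl
      _ = (⟨A, p₁, u₁, a₁⟩ : OAlg M₁).pi.f
            ((ρ.app (⟨A, p₁, u₁, a₁⟩ : OAlg M₁).A).f ((PHom.id (M₀.obj A)).f W₀)) := e₁.symm
      _ = p₂.f ((ρ.app A).f W₀) := congrFun (congrArg PHom.f hpp) W₀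
      _ = (⟨A, p₂, u₂, a₂⟩ : OAlg M₁).pi.f
            ((ρ.app (⟨A, p₂, u₂, a₂⟩ : OAlg M₁).A).f ((PHom.id (M₀.obj A)).f W₀)) := rfl
      _ = (⟨A, p₂, u₂, a₂⟩ : OAlg M₁).pi.f ((PHom.id (M₁.obj A)).f s) := e₂
      _ = p₂.f s := rfl
  · -- (b) morphisms of reducts are morphisms
    intro X hX Y hY φ
    obtain ⟨P, hPC, pa, pb, hbij, hord⟩ := hC X hX Y hY
    apply PHom.ext'
    intro s
    obtain ⟨W₀, e₁, e₂⟩ := density_span ρ hdense hPC pa pb hbij hord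
      (PHom.id X.A) φ.h (fun v v' => ⟨fun h => ⟨h, φ.h.mono h⟩, fun h => h.1⟩) s
    rw [M₀.map_id, M₁.map_id] at e₁
    have hcw : φ.h.f (X.pi.f ((ρ.app X.A).f W₀))
        = Y.pi.f ((ρ.app Y.A).f ((M₀.map φ.h).f W₀)) :=
      congrFun (congrArg PHom.f φ.comm) W₀
    show φ.h.f (X.pi.f s) = Y.pi.f ((M₁.map φ.h).f s)
    exact (congrArg φ.h.f e₁.symm).trans (hcw.trans e₂)
  · -- (c) congruence orderings
    intro X hX r
    constructor
    · rintro ⟨h1, h2, h3, hP1⟩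
      refine ⟨h1, h2, h3, ?_⟩
      intro s t hst
      have hst' : (M₁.map (quotHom (⟨r, h1, h2, h3⟩ : PreCong X.A))).f ((ρ.app X.A).f s)
          ≤ (M₁.map (quotHom (⟨r, h1, h2, h3⟩ : PreCong X.A))).f ((ρ.app X.A).f t) := by
        rw [← ohom_nat_apply ρ (quotHom (⟨r, h1, h2, h3⟩ : PreCong X.A)) s,
          ← ohom_nat_apply ρ (quotHom (⟨r, h1, h2, h3⟩ : PreCong X.A)) t]
        exact (ρ.app (quotPos (⟨r, h1, h2, h3⟩ : PreCong X.A))).mono hst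
      exact hP1 _ _ hst'
    · rintro ⟨h1, h2, h3, hP0⟩
      refine ⟨h1, h2, h3, ?_⟩
      intro s t hst
      obtain ⟨w, hw1, hw2⟩ := collage_exact M₁ hpre₁ hinj₁ hstd₁ X.A
        (quotPos (⟨r, h1, h2, h3⟩ : PreCong X.A))
        (quotHom (⟨r, h1, h2, h3⟩ : PreCong X.A)) s t hst
      obtain ⟨P, hPC, pa, pb, hbij, hord⟩ := hC X hX X hX
      obtain ⟨w₀, e₁, e₂⟩ := density_span ρ hdense hPC pa pb hbij hord
        (relFst X.A (CR X.A (quotPos (⟨r, h1, h2, h3⟩ : PreCong X.A))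
          (quotHom (⟨r, h1, h2, h3⟩ : PreCong X.A))))
        (relSnd X.A (CR X.A (quotPos (⟨r, h1, h2, h3⟩ : PreCong X.A))
          (quotHom (⟨r, h1, h2, h3⟩ : PreCong X.A))))
        (fun v v' => Iff.rfl) w
      have hle0 : (M₀.map (quotHom (⟨r, h1, h2, h3⟩ : PreCong X.A))).f
            ((M₀.map (relFst X.A (CR X.A (quotPos (⟨r, h1, h2, h3⟩ : PreCong X.A))
              (quotHom (⟨r, h1, h2, h3⟩ : PreCong X.A))))).f w₀)
          ≤ (M₀.map (quotHom (⟨r, h1, h2, h3⟩ : PreCong X.A))).f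
            ((M₀.map (relSnd X.A (CR X.A (quotPos (⟨r, h1, h2, h3⟩ : PreCong X.A))
              (quotHom (⟨r, h1, h2, h3⟩ : PreCong X.A))))).f w₀) := by
        rw [← omap_comp_apply, ← omap_comp_apply]
        exact omap_le_map hstd₀
          ((quotHom (⟨r, h1, h2, h3⟩ : PreCong X.A)).comp
            (relFst X.A (CR X.A (quotPos (⟨r, h1, h2, h3⟩ : PreCong X.A))
              (quotHom (⟨r, h1, h2, h3⟩ : PreCong X.A)))))
          ((quotHom (⟨r, h1, h2, h3⟩ : PreCong X.A)).comp
            (relSnd X.A (CR X.A (quotPos (⟨r, h1, h2, h3⟩ : PreCong X.A))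
              (quotHom (⟨r, h1, h2, h3⟩ : PreCong X.A)))))
          (fun v => v.property) w₀
      have hfin := hP0 _ _ hle0
      have e₁' : X.pi.f ((ρ.app X.A).f
          ((M₀.map (relFst X.A (CR X.A (quotPos (⟨r, h1, h2, h3⟩ : PreCong X.A))
            (quotHom (⟨r, h1, h2, h3⟩ : PreCong X.A))))).f w₀)) = X.pi.f s :=
        e₁.trans (congrArg X.pi.f hw1)
      have e₂' : X.pi.f ((ρ.app X.A).f
          ((M₀.map (relSnd X.A (CR X.A (quotPos (⟨r, h1, h2, h3⟩ : PreCong X.A))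
            (quotHom (⟨r, h1, h2, h3⟩ : PreCong X.A))))).f w₀)) = X.pi.f t :=
        e₂.trans (congrArg X.pi.f hw2)
      show r (X.pi.f s) (X.pi.f t)
      rw [← e₁', ← e₂']
      exact hfin
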